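/- Let b ∈ ℝⁿ with b ≠ 0 and x₀ ∈ ℝⁿ with x₀ᵀb > 0, let α be a real number with 0 < α < (bᵀx₀)/(bᵀb), and set H₀ = αI + ((x₀ − αb)(x₀ − αb)ᵀ)/((x₀ − αb)ᵀ b). Then H₀ is invertible with H₀⁻¹ = α⁻¹I − (α⁻¹/((x₀ − αb)ᵀ x₀)) (x₀ − αb)(x₀ − αb)ᵀ. -/

import Mathlib

open Matrix

lemma vecMulVec_mul_vecMulVec' {n : ℕ} (u v w z : Fin n → ℝ) :
    vecMulVec u v * vecMulVec w z = (v ⬝ᵥ w) • vecMulVec u z := by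
  ext i k
  simp only [mul_apply, vecMulVec_apply, Matrix.smul_apply, smul_eq_mul, dotProduct,
    Finset.sum_mul]
  exact Finset.sum_congr rfl fun j _ => by ring

/-- Explicit inverse of the constructed prior mean `H₀` (Sherman–Morrison). -/
theorem stmt_6
    {n : ℕ} (b x₀ : Fin n → ℝ) (hb : b ≠ 0) (hx₀b : x₀ ⬝ᵥ b > 0)
    (α : ℝ) (hα0 : 0 < α) (hα : α < (b ⬝ᵥ x₀) / (b ⬝ᵥ b)) :
    let H₀ := α • (1 : Matrix (Fin n) (Fin n) ℝ)
      + ((x₀ - α • b) ⬝ᵥ b)⁻¹ • vecMulVec (x₀ - α • b) (x₀ - α • b)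
    IsUnit H₀.det ∧
      H₀⁻¹ = α⁻¹ • (1 : Matrix (Fin n) (Fin n) ℝ)
        - (α⁻¹ / ((x₀ - α • b) ⬝ᵥ x₀)) • vecMulVec (x₀ - α • b) (x₀ - α • b) := by
  intro H₀
  set v : Fin n → ℝ := x₀ - α • b with hv
  have hbb : 0 < b ⬝ᵥ b := by
    have h0 : 0 ≤ b ⬝ᵥ b := Finset.sum_nonneg fun i _ => mul_self_nonneg (b i)
    rcases lt_or_eq_of_le h0 with h | h
    · exact h
    · exact absurd (dotProduct_self_eq_zero.mp h.symm) hb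
  have hs : v ⬝ᵥ b = x₀ ⬝ᵥ b - α * (b ⬝ᵥ b) := by
    simp [hv, sub_dotProduct, smul_dotProduct, smul_eq_mul]
  have hs0 : 0 < v ⬝ᵥ b := by
    rw [hs]
    have : α * (b ⬝ᵥ b) < b ⬝ᵥ x₀ := (lt_div_iff₀ hbb).mp hα
    rw [dotProduct_comm b x₀] at this
    linarith
  have ht : v ⬝ᵥ x₀ = v ⬝ᵥ v + α * (v ⬝ᵥ b) := by
    have : x₀ = v + α • b := by simp [hv]
    nth_rewrite 1 [this]
    simp [dotProduct_add, dotProduct_smul, smul_eq_mul]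
  have ht0 : 0 < v ⬝ᵥ x₀ := by
    rw [ht]
    have hvv : (0:ℝ) ≤ v ⬝ᵥ v := Finset.sum_nonneg fun i _ => mul_self_nonneg (v i)
    nlinarith
  set B : Matrix (Fin n) (Fin n) ℝ := α⁻¹ • (1 : Matrix (Fin n) (Fin n) ℝ)
    - (α⁻¹ / (v ⬝ᵥ x₀)) • vecMulVec v v with hB
  have key : H₀ * B = 1 := by
    rw [hB]
    show (α • (1 : Matrix (Fin n) (Fin n) ℝ) + (v ⬝ᵥ b)⁻¹ • vecMulVec v v)
        * (α⁻¹ • (1 : Matrix (Fin n) (Fin n) ℝ) - (α⁻¹ / (v ⬝ᵥ x₀)) • vecMulVec v v) = 1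
    simp only [Matrix.add_mul, Matrix.mul_sub, Matrix.smul_mul, Matrix.mul_smul,
      Matrix.one_mul, Matrix.mul_one, vecMulVec_mul_vecMulVec']
    match_scalars
    · field_simp
    · rw [ht]
      have h1 : v ⬝ᵥ v + α * (v ⬝ᵥ b) ≠ 0 := by rw [← ht]; exact ht0.ne'
      field_simp
      ring
  have hunit : IsUnit H₀.det := by
    have : H₀.det * B.det = 1 := by
      rw [← det_mul, key, det_one]
    exact isUnit_iff_exists_inv.mpr ⟨_, this⟩
  exact ⟨hunit, Matrix.inv_eq_right_inv key⟩
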